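/- arXiv:1208.2644 — 2 statements merged into one kernel-verified Lean document; each statement's English description precedes it below -/
import Mathlib

section
/- Let Q ∈ L²(ℝ³), and let Θ : ℝ³ → [0, ∞) be a bounded measurable function whose support is contained in some closed ball B(0,R). Let (v_n) and (w_n) be sequences that are bounded in L²(ℝ³) and such that v_n → 0 strongly in L²(K) for every compact set K ⊂ ℝ³. Then lim_{n→∞} ∫_{ℝ³} (Θ * |Q v_n|)(x) · |Q(x) w_n(x)| dx = 0. -/
open MeasureTheory Filter
open scoped ENNReal NNReal

/-- Cauchy–Schwarz for lintegral of product of absolute values. -/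
lemma cs_aux {α : Type*} [MeasurableSpace α] (μ : Measure α) (f g : α → ℝ)
    (hf : AEMeasurable f μ) (hg : AEMeasurable g μ) :
    ∫⁻ x, ENNReal.ofReal |f x * g x| ∂μ ≤ eLpNorm f 2 μ * eLpNorm g 2 μ := by
  have h1 : ∀ x, ENNReal.ofReal |f x * g x|
      = ((fun x => (‖f x‖₊ : ℝ≥0∞)) * fun x => (‖g x‖₊ : ℝ≥0∞)) x := by
    intro x
    simp only [Pi.mul_apply, abs_mul, ENNReal.ofReal_mul (abs_nonneg _),
      ← enorm_eq_nnnorm, Real.enorm_eq_ofReal_abs]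
  rw [lintegral_congr h1]
  have hpq : Real.HolderConjugate 2 2 := Real.holderConjugate_iff.mpr ⟨one_lt_two, by norm_num⟩
  refine le_trans (ENNReal.lintegral_mul_le_Lp_mul_Lq μ hpq
    (hf.enorm) (hg.enorm)) ?_
  rw [eLpNorm_eq_lintegral_rpow_enorm_toReal (by norm_num) (by norm_num),
    eLpNorm_eq_lintegral_rpow_enorm_toReal (by norm_num) (by norm_num)]
  norm_num
  rfl

/-- Tails of a finite lintegral tend to zero. -/
lemma tail_aux {E : Type*} [NormedAddCommGroup E] [MeasurableSpace E] [OpensMeasurableSpace E]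
    (μ : Measure E) (f : E → ℝ≥0∞)
    (hfin : ∫⁻ x, f x ∂μ ≠ ⊤) :
    Tendsto (fun k : ℕ => ∫⁻ x in (Metric.closedBall (0 : E) (k : ℝ))ᶜ, f x ∂μ)
      atTop (nhds 0) := by
  set ν := μ.withDensity f with hν
  have happ : ∀ s : Set E, MeasurableSet s → ν s = ∫⁻ x in s, f x ∂μ := fun s hs =>
    withDensity_apply f hs
  have hνuniv : ν Set.univ ≠ ⊤ := by
    rw [happ _ MeasurableSet.univ, Measure.restrict_univ]; exact hfin
  set s : ℕ → Set E := fun k => (Metric.closedBall (0 : E) (k : ℝ))ᶜ with hs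
  have hanti : Antitone s := by
    intro a b hab
    exact Set.compl_subset_compl.2 (Metric.closedBall_subset_closedBall (by exact_mod_cast hab))
  have hempty : (⋂ k, s k) = ∅ := by
    ext x
    simp only [hs, Set.mem_iInter, Set.mem_compl_iff, Metric.mem_closedBall,
      Set.mem_empty_iff_false, iff_false, not_forall, not_not]
    exact ⟨⌈dist x 0⌉₊, Nat.le_ceil _⟩
  have h2 : Tendsto (ν ∘ s) atTop (nhds (ν (⋂ k, s k))) :=
    tendsto_measure_iInter_atTop
      (fun k => (measurableSet_closedBall.compl).nullMeasurableSet)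
      hanti ⟨0, ((measure_mono (Set.subset_univ _)).trans_lt hνuniv.lt_top).ne⟩
  rw [hempty, measure_empty] at h2
  refine h2.congr fun k => ?_
  exact happ _ measurableSet_closedBall.compl

/-- Let `Q ∈ L²(ℝ³)`, let `Θ : ℝ³ → [0,∞)` be bounded, measurable, with support contained in
a closed ball `B(0,R)`, and let `(v_n)`, `(w_n)` be bounded sequences in `L²(ℝ³)` with
`v_n → 0` in `L²(K)` for every compact `K`. Then
`∫ (Θ * |Q v_n|)(x) |Q(x) w_n(x)| dx → 0`. -/
theorem stmt_7 (Q : EuclideanSpace ℝ (Fin 3) → ℝ) (hQ : MemLp Q 2 volume)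
    (Θ : EuclideanSpace ℝ (Fin 3) → ℝ) (hΘ_meas : Measurable Θ)
    (hΘ_nonneg : ∀ x, 0 ≤ Θ x) (hΘ_bdd : ∃ M : ℝ, ∀ x, Θ x ≤ M)
    (hΘ_supp : ∃ R : ℝ, Function.support Θ ⊆ Metric.closedBall 0 R)
    (v w : ℕ → EuclideanSpace ℝ (Fin 3) → ℝ)
    (hv_meas : ∀ n, AEStronglyMeasurable (v n) volume)
    (hw_meas : ∀ n, AEStronglyMeasurable (w n) volume)
    (hv_bdd : ∃ M : ℝ, ∀ n, eLpNorm (v n) 2 volume ≤ ENNReal.ofReal M)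
    (hw_bdd : ∃ M : ℝ, ∀ n, eLpNorm (w n) 2 volume ≤ ENNReal.ofReal M)
    (hv_loc : ∀ K : Set (EuclideanSpace ℝ (Fin 3)), IsCompact K →
      Tendsto (fun n => eLpNorm (v n) 2 (volume.restrict K)) atTop (nhds 0)) :
    Tendsto (fun n =>
        ∫⁻ x, (∫⁻ y, ENNReal.ofReal (Θ (x - y) * |Q y * v n y|)) *
          ENNReal.ofReal (|Q x * w n x|))
      atTop (nhds 0) := by
  obtain ⟨M, hM⟩ := hΘ_bdd
  obtain ⟨Mv, hMv⟩ := hv_bdd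
  obtain ⟨Mw, hMw⟩ := hw_bdd
  set CQ : ℝ≥0∞ := eLpNorm Q 2 volume with hCQdef
  have hCQ : CQ ≠ ⊤ := hQ.2.ne
  set A : ℕ → ℝ≥0∞ := fun n => ∫⁻ y, ENNReal.ofReal |Q y * v n y| with hAdef
  have hQm : AEMeasurable Q volume := hQ.1.aemeasurable
  -- Step 1 : A tends to 0
  have hA : Tendsto A atTop (nhds 0) := by
    rw [ENNReal.tendsto_atTop_zero]
    intro ε hε
    set ε' : ℝ≥0∞ := min ε 1 with hε'def
    have hε'0 : ε' ≠ 0 := (lt_min hε zero_lt_one).ne'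
    have hε'le : ε' ≤ ε := min_le_left _ _
    have hhalf : (0:ℝ≥0∞) < ε' / 2 := ENNReal.div_pos hε'0 (by norm_num)
    -- finite integral of ‖Q‖₊ ^ 2
    have hQfin : ∫⁻ x, (‖Q x‖₊ : ℝ≥0∞) ^ (2:ℝ) ∂volume ≠ ⊤ := by
      intro hcon
      have h := hQ.2.ne
      rw [eLpNorm_eq_lintegral_rpow_enorm_toReal (by norm_num) (by norm_num)] at h
      simp only [enorm_eq_nnnorm] at h
      rw [show ((2:ℝ≥0∞).toReal) = (2:ℝ) by norm_num] at h
      rw [hcon, ENNReal.top_rpow_of_pos (by norm_num)] at h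
      exact h rfl
    have htail := tail_aux volume (fun x => (‖Q x‖₊ : ℝ≥0∞) ^ (2:ℝ)) hQfin
    set Mv' : ℝ≥0∞ := ENNReal.ofReal Mv + 1 with hMv'def
    have hMv'0 : Mv' ≠ 0 := by simp [hMv'def]
    have hMv'top : Mv' ≠ ⊤ := by simp [hMv'def]
    set δ : ℝ≥0∞ := ε' / 2 / Mv' with hδdef
    have hδ0 : δ ≠ 0 := (ENNReal.div_pos hhalf.ne' hMv'top).ne'
    have hδsq : (0:ℝ≥0∞) < δ ^ (2:ℕ) := pos_iff_ne_zero.2 (pow_ne_zero _ hδ0)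
    obtain ⟨k, hk⟩ := (ENNReal.tendsto_atTop_zero.1 htail) (δ ^ (2:ℕ)) hδsq
    set K : Set (EuclideanSpace ℝ (Fin 3)) := Metric.closedBall 0 (k : ℝ) with hKdef
    have hKmeas : MeasurableSet K := measurableSet_closedBall
    have hKcpt : IsCompact K := isCompact_closedBall _ _
    -- tail bound
    have htailQ : eLpNorm Q 2 (volume.restrict Kᶜ) ≤ δ := by
      rw [eLpNorm_eq_lintegral_rpow_enorm_toReal (by norm_num) (by norm_num)]
      have h1 : ∫⁻ x in Kᶜ, (‖Q x‖₊ : ℝ≥0∞) ^ ((2:ℝ≥0∞).toReal) ∂volume ≤ δ ^ (2:ℕ) := by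
        have := hk k le_rfl
        simpa using this
      calc (∫⁻ x in Kᶜ, (‖Q x‖₊ : ℝ≥0∞) ^ ((2:ℝ≥0∞).toReal) ∂volume) ^ (1/(2:ℝ≥0∞).toReal)
          ≤ (δ ^ (2:ℕ)) ^ (1/(2:ℝ≥0∞).toReal) := by
            exact ENNReal.rpow_le_rpow h1 (by norm_num)
        _ = δ := by
            rw [← ENNReal.rpow_natCast δ 2, ← ENNReal.rpow_mul]
            norm_num
    -- part on K tends to 0
    have hlocal : Tendsto (fun n => CQ * eLpNorm (v n) 2 (volume.restrict K)) atTop (nhds 0) := by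
      have := ENNReal.Tendsto.const_mul (hv_loc K hKcpt) (Or.inr hCQ)
      simpa using this
    obtain ⟨N, hN⟩ := (ENNReal.tendsto_atTop_zero.1 hlocal) (ε'/2) hhalf
    refine ⟨N, fun n hn => ?_⟩
    have hvm : AEMeasurable (v n) volume := (hv_meas n).aemeasurable
    have hsplit : A n = (∫⁻ y in K, ENNReal.ofReal |Q y * v n y|)
        + ∫⁻ y in Kᶜ, ENNReal.ofReal |Q y * v n y| :=
      (lintegral_add_compl _ hKmeas).symm
    have hterm1 : (∫⁻ y in K, ENNReal.ofReal |Q y * v n y|) ≤ ε' / 2 := by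
      calc (∫⁻ y in K, ENNReal.ofReal |Q y * v n y|)
          ≤ eLpNorm Q 2 (volume.restrict K) * eLpNorm (v n) 2 (volume.restrict K) :=
            cs_aux _ _ _ hQm.restrict hvm.restrict
        _ ≤ CQ * eLpNorm (v n) 2 (volume.restrict K) :=
            mul_le_mul_left (eLpNorm_mono_measure _ Measure.restrict_le_self) _
        _ ≤ ε' / 2 := hN n hn
    have hterm2 : (∫⁻ y in Kᶜ, ENNReal.ofReal |Q y * v n y|) ≤ ε' / 2 := by
      calc (∫⁻ y in Kᶜ, ENNReal.ofReal |Q y * v n y|)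
          ≤ eLpNorm Q 2 (volume.restrict Kᶜ) * eLpNorm (v n) 2 (volume.restrict Kᶜ) :=
            cs_aux _ _ _ hQm.restrict hvm.restrict
        _ ≤ δ * Mv' := by
            refine mul_le_mul' htailQ ?_
            refine le_trans (eLpNorm_mono_measure _ Measure.restrict_le_self) ?_
            exact le_trans (hMv n) le_self_add
        _ = ε' / 2 := by
            rw [hδdef]
            exact ENNReal.div_mul_cancel hMv'0 hMv'top
    calc A n ≤ ε'/2 + ε'/2 := by rw [hsplit]; exact add_le_add hterm1 hterm2
      _ = ε' := ENNReal.add_halves _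
      _ ≤ ε := hε'le
  -- Step 2 : bound the main integral by a constant times A n
  set C : ℝ≥0∞ := ENNReal.ofReal M * (CQ * ENNReal.ofReal Mw) with hCdef
  have hCtop : C ≠ ⊤ := by
    simp only [hCdef]
    exact ENNReal.mul_ne_top ENNReal.ofReal_ne_top
      (ENNReal.mul_ne_top hCQ ENNReal.ofReal_ne_top)
  have hbound : ∀ n,
      (∫⁻ x, (∫⁻ y, ENNReal.ofReal (Θ (x - y) * |Q y * v n y|)) *
          ENNReal.ofReal (|Q x * w n x|)) ≤ C * A n := by
    intro n
    have hwm : AEMeasurable (w n) volume := (hw_meas n).aemeasurable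
    have hinner : ∀ x, (∫⁻ y, ENNReal.ofReal (Θ (x - y) * |Q y * v n y|))
        ≤ ENNReal.ofReal M * A n := by
      intro x
      calc (∫⁻ y, ENNReal.ofReal (Θ (x - y) * |Q y * v n y|))
          = ∫⁻ y, ENNReal.ofReal (Θ (x - y)) * ENNReal.ofReal |Q y * v n y| :=
            lintegral_congr fun y => ENNReal.ofReal_mul (hΘ_nonneg _)
        _ ≤ ∫⁻ y, ENNReal.ofReal M * ENNReal.ofReal |Q y * v n y| :=
            lintegral_mono fun y =>
              mul_le_mul_left (ENNReal.ofReal_le_ofReal (hM _)) _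
        _ = ENNReal.ofReal M * A n := lintegral_const_mul' _ _ ENNReal.ofReal_ne_top
    have hD : (∫⁻ x, ENNReal.ofReal |Q x * w n x|) ≤ CQ * ENNReal.ofReal Mw := by
      refine le_trans (cs_aux volume Q (w n) hQm hwm) ?_
      exact mul_le_mul_right (hMw n) _
    calc (∫⁻ x, (∫⁻ y, ENNReal.ofReal (Θ (x - y) * |Q y * v n y|)) *
            ENNReal.ofReal (|Q x * w n x|))
        ≤ ∫⁻ x, (ENNReal.ofReal M * A n) * ENNReal.ofReal (|Q x * w n x|) :=
          lintegral_mono fun x => mul_le_mul_left (hinner x) _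
      _ = (ENNReal.ofReal M * A n) * ∫⁻ x, ENNReal.ofReal (|Q x * w n x|) :=
          lintegral_const_mul' _ _
            (ENNReal.mul_ne_top ENNReal.ofReal_ne_top (by
              have : A n ≤ CQ * ENNReal.ofReal Mv := by
                refine le_trans (cs_aux volume Q (v n) hQm (hv_meas n).aemeasurable) ?_
                exact mul_le_mul_right (hMv n) _
              exact (this.trans_lt (ENNReal.mul_lt_top hCQ.lt_top ENNReal.ofReal_lt_top)).ne))
      _ ≤ (ENNReal.ofReal M * A n) * (CQ * ENNReal.ofReal Mw) :=
          mul_le_mul_right hD _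
      _ = C * A n := by rw [hCdef]; ring
  have hCA : Tendsto (fun n => C * A n) atTop (nhds 0) := by
    have := ENNReal.Tendsto.const_mul hA (Or.inr hCtop)
    simpa using this
  exact tendsto_of_tendsto_of_tendsto_of_le_of_le tendsto_const_nhds hCA
    (fun n => zero_le) hbound
end

section
/- Let Q ∈ L²(ℝ³) ∩ L⁶(ℝ³). Let (v_n) and (w_n) be sequences that are bounded in L²(ℝ³) and such that v_n → 0 strongly in L²(K) for every compact set K ⊂ ℝ³. Then lim_{n→∞} ∫_{ℝ³} ( |·|⁻¹ * |Q v_n| )(x) · |Q(x) w_n(x)| dx = 0, where ( |·|⁻¹ * f )(x) = ∫_{ℝ³} f(y)/|x−y| dy. -/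
open MeasureTheory Filter Metric
open scoped ENNReal NNReal
noncomputable section
namespace Stmt9

abbrev E3 := EuclideanSpace ℝ (Fin 3)

def KK : E3 → ℝ≥0∞ := fun z => ENNReal.ofReal ‖z‖⁻¹

lemma KK_meas : Measurable KK := (measurable_norm.inv).ennreal_ofReal

lemma holder3 {α : Type*} [MeasurableSpace α] (μ : Measure α) {a b c : α → ℝ≥0∞}
    (ha : AEMeasurable a μ) (hb : AEMeasurable b μ) (hc : AEMeasurable c μ) :
    ∫⁻ z, a z * b z * c z ∂μ ≤
      (∫⁻ z, a z ^ (3:ℝ) ∂μ) ^ (1/3:ℝ) * (∫⁻ z, b z ^ (3:ℝ) ∂μ) ^ (1/3:ℝ) *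
        (∫⁻ z, c z ^ (3:ℝ) ∂μ) ^ (1/3:ℝ) := by
  have hpq : (3:ℝ).HolderConjugate (3/2) := ⟨by norm_num, by norm_num, by norm_num⟩
  have h22 : (2:ℝ).HolderConjugate 2 := ⟨by norm_num, by norm_num, by norm_num⟩
  have h1 : ∫⁻ z, a z * b z * c z ∂μ ≤
      (∫⁻ z, a z ^ (3:ℝ) ∂μ) ^ (1/3:ℝ) * (∫⁻ z, (b z * c z) ^ (3/2:ℝ) ∂μ) ^ (1/(3/2):ℝ) := by
    have := ENNReal.lintegral_mul_le_Lp_mul_Lq μ hpq ha (hb.mul hc)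
    simpa [mul_assoc] using this
  have h2 : ∫⁻ z, (b z * c z) ^ (3/2:ℝ) ∂μ ≤
      (∫⁻ z, b z ^ (3:ℝ) ∂μ) ^ (1/2:ℝ) * (∫⁻ z, c z ^ (3:ℝ) ∂μ) ^ (1/2:ℝ) := by
    have := ENNReal.lintegral_mul_le_Lp_mul_Lq μ h22
      (hf := (hb.pow_const (3/2:ℝ))) (hg := (hc.pow_const (3/2:ℝ)))
    calc ∫⁻ z, (b z * c z) ^ (3/2:ℝ) ∂μ
        = ∫⁻ z, (fun z => b z ^ (3/2:ℝ)) z * (fun z => c z ^ (3/2:ℝ)) z ∂μ := by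
          simp_rw [ENNReal.mul_rpow_of_nonneg _ _ (by norm_num : (0:ℝ) ≤ 3/2)]
      _ ≤ (∫⁻ z, (b z ^ (3/2:ℝ)) ^ (2:ℝ) ∂μ) ^ (1/2:ℝ) *
            (∫⁻ z, (c z ^ (3/2:ℝ)) ^ (2:ℝ) ∂μ) ^ (1/2:ℝ) := by
          simpa using this
      _ = _ := by
          simp_rw [← ENNReal.rpow_mul]
          norm_num
  calc ∫⁻ z, a z * b z * c z ∂μ
      ≤ (∫⁻ z, a z ^ (3:ℝ) ∂μ) ^ (1/3:ℝ) * (∫⁻ z, (b z * c z) ^ (3/2:ℝ) ∂μ) ^ (1/(3/2):ℝ) := h1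
    _ ≤ (∫⁻ z, a z ^ (3:ℝ) ∂μ) ^ (1/3:ℝ) *
          ((∫⁻ z, b z ^ (3:ℝ) ∂μ) ^ (1/2:ℝ) * (∫⁻ z, c z ^ (3:ℝ) ∂μ) ^ (1/2:ℝ)) ^ (1/(3/2):ℝ) := by
        gcongr <;> norm_num
    _ = _ := by
        rw [ENNReal.mul_rpow_of_nonneg _ _ (by norm_num : (0:ℝ) ≤ 1/(3/2)), ← ENNReal.rpow_mul,
          ← ENNReal.rpow_mul, mul_assoc]
        norm_num




lemma finrank_E3 : Module.finrank ℝ E3 = 3 := by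
  simp [finrank_euclideanSpace]

lemma Jone_ne_top : ∫⁻ z in ball (0:E3) 1, KK z ^ (3/2:ℝ) ≠ ∞ := by
  set V : ℝ≥0∞ := volume (ball (0:E3) 1) with hV
  have hVtop : V ≠ ∞ := measure_ball_lt_top.ne
  set s : ℕ → Set E3 := fun k => ball (0:E3) ((2⁻¹:ℝ)^k) \ ball 0 ((2⁻¹:ℝ)^(k+1)) with hs
  -- cover
  have hcover : ball (0:E3) 1 ⊆ {0} ∪ ⋃ k, s k := by
    intro z hz
    rcases eq_or_ne z 0 with rfl | hz0
    · exact Or.inl rfl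
    have hzpos : 0 < ‖z‖ := norm_pos_iff.mpr hz0
    have hz1 : ‖z‖ < 1 := by simpa using mem_ball_iff_norm.mp hz
    have hex : ∃ k : ℕ, (2⁻¹:ℝ)^(k+1) ≤ ‖z‖ := by
      have ht : Tendsto (fun k : ℕ => (2⁻¹:ℝ)^(k+1)) atTop (nhds 0) := by
        exact (tendsto_pow_atTop_nhds_zero_of_lt_one (by norm_num) (by norm_num)).comp
          (tendsto_add_atTop_nat 1)
      rcases (ht.eventually (eventually_lt_nhds hzpos)).exists with ⟨k, hk⟩
      exact ⟨k, hk.le⟩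
    classical
    right
    refine Set.mem_iUnion.mpr ⟨Nat.find hex, ?_⟩
    constructor
    · rw [mem_ball_iff_norm]
      simp only [sub_zero]
      rcases Nat.eq_zero_or_pos (Nat.find hex) with h0 | hpos
      · rw [h0]; simpa using hz1
      · have := Nat.find_min hex (Nat.sub_lt hpos one_pos)
        push_neg at this
        calc ‖z‖ < (2⁻¹:ℝ) ^ ((Nat.find hex - 1) + 1) := this
          _ = (2⁻¹:ℝ) ^ (Nat.find hex) := by rw [Nat.sub_add_cancel hpos]
    · intro hmem
      rw [mem_ball_iff_norm] at hmem
      simp only [sub_zero] at hmem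
      exact absurd (Nat.find_spec hex) (not_le.mpr hmem)
  -- bound on each shell
  have hbound : ∀ k : ℕ, ∫⁻ z in s k, KK z ^ (3/2:ℝ) ≤
      (ENNReal.ofReal 4 * V) * ((2⁻¹:ℝ≥0∞))^k := by
    intro k
    have harith : ((2:ℝ)^(k+1))^2 * ((2⁻¹:ℝ)^k)^3 = 4 * (2⁻¹:ℝ)^k := by
      rw [inv_pow, inv_pow]
      field_simp
      ring
    have hofk : ENNReal.ofReal ((2⁻¹:ℝ)^k) = (2⁻¹:ℝ≥0∞)^k := by
      rw [ENNReal.ofReal_pow (by norm_num)]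
      congr 1
      rw [ENNReal.ofReal_inv_of_pos (by norm_num)]
      norm_num
    have hmeas : MeasurableSet (s k) := measurableSet_ball.diff measurableSet_ball
    have hpt : ∀ z ∈ s k, KK z ^ (3/2:ℝ) ≤ ENNReal.ofReal (((2:ℝ)^(k+1))^2) := by
      intro z hz
      have hlow : (2⁻¹:ℝ)^(k+1) ≤ ‖z‖ := by
        have := hz.2
        rw [mem_ball_iff_norm] at this
        simp only [sub_zero] at this
        exact not_lt.mp this
      have hpow : (0:ℝ) < (2⁻¹:ℝ)^(k+1) := by positivity
      have hinv : ‖z‖⁻¹ ≤ (2:ℝ)^(k+1) := by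
        rw [← inv_inv ((2:ℝ)^(k+1))]
        apply inv_anti₀
        · positivity
        · rw [← inv_pow]; exact hlow
      have h1 : KK z ≤ ENNReal.ofReal ((2:ℝ)^(k+1)) := ENNReal.ofReal_le_ofReal hinv
      calc KK z ^ (3/2:ℝ) ≤ (ENNReal.ofReal ((2:ℝ)^(k+1))) ^ (3/2:ℝ) :=
            ENNReal.rpow_le_rpow h1 (by norm_num)
        _ ≤ (ENNReal.ofReal ((2:ℝ)^(k+1))) ^ (2:ℝ) := by
            apply ENNReal.rpow_le_rpow_of_exponent_le
            · exact ENNReal.one_le_ofReal.mpr (one_le_pow₀ (by norm_num))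
            · norm_num
        _ = ENNReal.ofReal (((2:ℝ)^(k+1))^2) := by
            rw [ENNReal.ofReal_rpow_of_pos (by positivity), Real.rpow_two]
    calc ∫⁻ z in s k, KK z ^ (3/2:ℝ)
        ≤ ∫⁻ _ in s k, ENNReal.ofReal (((2:ℝ)^(k+1))^2) := by
          apply lintegral_mono_ae
          filter_upwards [ae_restrict_mem hmeas] with z hz using hpt z hz
      _ = ENNReal.ofReal (((2:ℝ)^(k+1))^2) * volume (s k) := setLIntegral_const _ _
      _ ≤ ENNReal.ofReal (((2:ℝ)^(k+1))^2) * volume (ball (0:E3) ((2⁻¹:ℝ)^k)) :=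
          mul_le_mul_right (measure_mono Set.diff_subset) _
      _ = (ENNReal.ofReal 4 * V) * ((2⁻¹:ℝ≥0∞))^k := by
          rw [Measure.addHaar_ball _ _ (by positivity), finrank_E3, ← hV]
          calc ENNReal.ofReal (((2:ℝ)^(k+1))^2) * (ENNReal.ofReal (((2⁻¹:ℝ)^k)^3) * V)
              = ENNReal.ofReal (((2:ℝ)^(k+1))^2 * ((2⁻¹:ℝ)^k)^3) * V := by
                rw [ENNReal.ofReal_mul (by positivity)]; ring
            _ = ENNReal.ofReal (4 * (2⁻¹:ℝ)^k) * V := by rw [harith]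
            _ = (ENNReal.ofReal 4 * V) * ((2⁻¹:ℝ≥0∞))^k := by
                rw [ENNReal.ofReal_mul (by norm_num), hofk]; ring
  have hzero : ∫⁻ z in ({0} : Set E3), KK z ^ (3/2:ℝ) = 0 := by
    have h0 : volume ({0} : Set E3) = 0 := measure_singleton 0
    rw [Measure.restrict_eq_zero.mpr h0, lintegral_zero_measure]
  have hgeo : (∑' k : ℕ, (2⁻¹:ℝ≥0∞)^k) ≠ ∞ := by
    rw [ENNReal.tsum_geometric, ENNReal.one_sub_inv_two]
    simp
  have hfin : ∫⁻ z in ball (0:E3) 1, KK z ^ (3/2:ℝ) < ∞ :=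
    calc ∫⁻ z in ball (0:E3) 1, KK z ^ (3/2:ℝ)
      ≤ ∫⁻ z in ({0} : Set E3) ∪ ⋃ k, s k, KK z ^ (3/2:ℝ) := lintegral_mono_set hcover
    _ ≤ (∫⁻ z in ({0} : Set E3), KK z ^ (3/2:ℝ)) + ∫⁻ z in ⋃ k, s k, KK z ^ (3/2:ℝ) :=
        lintegral_union_le _ _ _
    _ ≤ 0 + ∑' k, ∫⁻ z in s k, KK z ^ (3/2:ℝ) := by
        rw [hzero]; exact add_le_add le_rfl (lintegral_iUnion_le _ _)
    _ ≤ 0 + ∑' k, ((ENNReal.ofReal 4 * V) * ((2⁻¹:ℝ≥0∞))^k) := by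
        exact add_le_add le_rfl (ENNReal.tsum_le_tsum hbound)
    _ < ∞ := by
        rw [zero_add, ENNReal.tsum_mul_left]
        exact ENNReal.mul_lt_top
          (ENNReal.mul_lt_top ENNReal.ofReal_lt_top hVtop.lt_top) hgeo.lt_top
  exact hfin.ne

lemma J_tendsto : Tendsto (fun m : ℕ => ∫⁻ z in ball (0:E3) (1/(m+1:ℝ)), KK z ^ (3/2:ℝ))
    atTop (nhds 0) := by
  set ν : Measure E3 := volume.withDensity (fun z => KK z ^ (3/2:ℝ)) with hν
  have happ : ∀ s : Set E3, MeasurableSet s → ν s = ∫⁻ z in s, KK z ^ (3/2:ℝ) := by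
    intro s hs
    rw [hν, withDensity_apply _ hs]
  have heq : (fun m : ℕ => ∫⁻ z in ball (0:E3) (1/(m+1:ℝ)), KK z ^ (3/2:ℝ)) =
      fun m : ℕ => ν (ball (0:E3) (1/(m+1:ℝ))) := by
    funext m; rw [happ _ measurableSet_ball]
  rw [heq]
  have hanti : Antitone (fun m : ℕ => ball (0:E3) (1/(m+1:ℝ))) := by
    intro a b hab
    apply ball_subset_ball
    apply one_div_le_one_div_of_le (by positivity)
    exact_mod_cast Nat.add_le_add_right hab 1
  have hinter : (⋂ m : ℕ, ball (0:E3) (1/(m+1:ℝ))) = {0} := by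
    ext z
    simp only [Set.mem_iInter, mem_ball_iff_norm, sub_zero, Set.mem_singleton_iff]
    constructor
    · intro h
      have hle : ‖z‖ ≤ 0 := by
        have ht : Tendsto (fun m : ℕ => 1/(m+1:ℝ)) atTop (nhds 0) :=
          tendsto_one_div_add_atTop_nhds_zero_nat
        exact ge_of_tendsto ht (Eventually.of_forall fun m => (h m).le)
      exact norm_le_zero_iff.mp hle
    · rintro rfl
      intro m
      simp only [norm_zero]
      positivity
  have hfin : ν (ball (0:E3) (1/((0:ℕ)+1:ℝ))) ≠ ∞ := by
    rw [happ _ measurableSet_ball]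
    norm_num
    exact Jone_ne_top
  have := tendsto_measure_iInter_atTop (μ := ν)
    (fun m => measurableSet_ball.nullMeasurableSet) hanti ⟨0, hfin⟩
  rw [hinter] at this
  have hzero : ν ({0} : Set E3) = 0 := by
    rw [happ _ (measurableSet_singleton 0), Measure.restrict_eq_zero.mpr (measure_singleton 0),
      lintegral_zero_measure]
  rw [hzero] at this
  exact this

lemma tail_tendsto {q : E3 → ℝ≥0∞} (hq : Measurable q) (hq2 : ∫⁻ x, q x ^ (2:ℝ) ≠ ∞) :
    Tendsto (fun r : ℕ => ∫⁻ x in (closedBall (0:E3) r)ᶜ, q x ^ (2:ℝ)) atTop (nhds 0) := by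
  set ν : Measure E3 := volume.withDensity (fun x => q x ^ (2:ℝ)) with hν
  have happ : ∀ s : Set E3, MeasurableSet s → ν s = ∫⁻ x in s, q x ^ (2:ℝ) := by
    intro s hs; rw [hν, withDensity_apply _ hs]
  have heq : (fun r : ℕ => ∫⁻ x in (closedBall (0:E3) r)ᶜ, q x ^ (2:ℝ)) =
      fun r : ℕ => ν ((closedBall (0:E3) r)ᶜ) := by
    funext r; rw [happ _ measurableSet_closedBall.compl]
  rw [heq]
  have hanti : Antitone (fun r : ℕ => (closedBall (0:E3) r)ᶜ) := by
    intro a b hab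
    exact Set.compl_subset_compl.mpr (closedBall_subset_closedBall (by exact_mod_cast hab))
  have hinter : (⋂ r : ℕ, (closedBall (0:E3) r)ᶜ) = ∅ := by
    ext x
    simp only [Set.mem_iInter, Set.mem_compl_iff, mem_closedBall_iff_norm, sub_zero,
      Set.mem_empty_iff_false, iff_false, not_forall, not_not]
    obtain ⟨r, hr⟩ := exists_nat_ge ‖x‖
    exact ⟨r, hr⟩
  have hfin : ν ((closedBall (0:E3) (0:ℕ))ᶜ) ≠ ∞ := by
    rw [happ _ measurableSet_closedBall.compl]
    exact (lt_of_le_of_lt (setLIntegral_le_lintegral _ _) hq2.lt_top).ne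
  have := tendsto_measure_iInter_atTop (μ := ν)
    (fun r => measurableSet_closedBall.compl.nullMeasurableSet) hanti ⟨0, hfin⟩
  rw [hinter] at this
  simpa [Function.comp_def] using this


def K1 (δ : ℝ) : E3 → ℝ≥0∞ := (ball (0:E3) δ).indicator KK
lemma K1_meas (δ : ℝ) : Measurable (K1 δ) := KK_meas.indicator measurableSet_ball

lemma half_mul_half (x : ℝ≥0∞) : x ^ (1/2:ℝ) * x ^ (1/2:ℝ) = x := by
  rw [← ENNReal.rpow_add_of_nonneg _ _ (by norm_num) (by norm_num)]
  norm_num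

lemma third_mul_third (x : ℝ≥0∞) : x ^ (1/3:ℝ) * x ^ (1/3:ℝ) = x ^ (2/3:ℝ) := by
  rw [← ENNReal.rpow_add_of_nonneg _ _ (by norm_num) (by norm_num)]
  norm_num

lemma cube_half (x : ℝ≥0∞) : (x ^ (1/2:ℝ)) ^ (3:ℝ) = x ^ (3/2:ℝ) := by
  rw [← ENNReal.rpow_mul]; norm_num

lemma K1_symm (δ : ℝ) (x y : E3) : K1 δ (x - y) = K1 δ (y - x) := by
  unfold K1 KK
  by_cases h : ‖x - y‖ < δ
  · rw [Set.indicator_of_mem (by simpa [mem_ball_zero_iff] using h),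
      Set.indicator_of_mem (by simp only [mem_ball_zero_iff, norm_sub_rev y x]; exact h)]
    simp [norm_sub_rev x y]
  · rw [Set.indicator_of_notMem (by simpa [mem_ball_zero_iff] using h),
      Set.indicator_of_notMem (by simp only [mem_ball_zero_iff, norm_sub_rev y x]; exact h)]

lemma K_le (δ : ℝ) (hδ : 0 < δ) (z : E3) : KK z ≤ K1 δ z + ENNReal.ofReal δ⁻¹ := by
  by_cases h : z ∈ ball (0:E3) δ
  · rw [K1, Set.indicator_of_mem h]; exact le_self_add
  · rw [K1, Set.indicator_of_notMem h, zero_add]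
    rw [mem_ball_zero_iff, not_lt] at h
    exact ENNReal.ofReal_le_ofReal (inv_anti₀ hδ h)

lemma J_eq (δ : ℝ) : ∫⁻ z, K1 δ z ^ (3/2:ℝ) = ∫⁻ z in ball (0:E3) δ, KK z ^ (3/2:ℝ) := by
  rw [← lintegral_indicator measurableSet_ball]
  congr 1; funext z
  by_cases h : z ∈ ball (0:E3) δ
  · simp [K1, Set.indicator_of_mem h]
  · simp [K1, Set.indicator_of_notMem h, ENNReal.zero_rpow_of_pos (by norm_num : (0:ℝ) < 3/2)]

lemma lint_K1_sub (δ : ℝ) (y : E3) :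
    ∫⁻ x, K1 δ (x - y) ^ (3/2:ℝ) = ∫⁻ z, K1 δ z ^ (3/2:ℝ) :=
  lintegral_sub_right_eq_self (fun z => K1 δ z ^ (3/2:ℝ)) y

lemma holder2 {α : Type*} [MeasurableSpace α] (μ : Measure α) {a b : α → ℝ≥0∞}
    (ha : AEMeasurable a μ) (hb : AEMeasurable b μ) :
    ∫⁻ x, a x * b x ∂μ ≤
      (∫⁻ x, a x ^ (2:ℝ) ∂μ) ^ (1/2:ℝ) * (∫⁻ x, b x ^ (2:ℝ) ∂μ) ^ (1/2:ℝ) := by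
  simpa using ENNReal.lintegral_mul_le_Lp_mul_Lq μ
    (⟨by norm_num, by norm_num, by norm_num⟩ : (2:ℝ).HolderConjugate 2) ha hb

lemma f32_bound {q u : E3 → ℝ≥0∞} (hq : Measurable q) (hu : Measurable u) :
    ∫⁻ x, (q x * u x) ^ (3/2:ℝ) ≤
      (∫⁻ x, q x ^ (6:ℝ)) ^ (1/4:ℝ) * (∫⁻ x, u x ^ (2:ℝ)) ^ (3/4:ℝ) := by
  have h43 : (4:ℝ).HolderConjugate (4/3) := ⟨by norm_num, by norm_num, by norm_num⟩
  calc ∫⁻ x, (q x * u x) ^ (3/2:ℝ)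
      = ∫⁻ x, (fun x => q x ^ (3/2:ℝ)) x * (fun x => u x ^ (3/2:ℝ)) x := by
        simp_rw [ENNReal.mul_rpow_of_nonneg _ _ (by norm_num : (0:ℝ) ≤ 3/2)]
    _ ≤ (∫⁻ x, (q x ^ (3/2:ℝ)) ^ (4:ℝ)) ^ (1/4:ℝ) *
          (∫⁻ x, (u x ^ (3/2:ℝ)) ^ (4/3:ℝ)) ^ (1/(4/3):ℝ) :=
        ENNReal.lintegral_mul_le_Lp_mul_Lq volume h43
          ((hq.pow_const _).aemeasurable) ((hu.pow_const _).aemeasurable)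
    _ = (∫⁻ x, q x ^ (6:ℝ)) ^ (1/4:ℝ) * (∫⁻ x, u x ^ (2:ℝ)) ^ (3/4:ℝ) := by
        simp_rw [← ENNReal.rpow_mul]
        norm_num

lemma single_est {f g : E3 → ℝ≥0∞} (hf : Measurable f) (hg : Measurable g) {δ : ℝ} (hδ : 0 < δ) :
    ∫⁻ x, (∫⁻ y, f y * KK (x - y)) * g x ≤
      ((∫⁻ y, f y ^ (3/2:ℝ)) * (∫⁻ z in ball (0:E3) δ, KK z ^ (3/2:ℝ))) ^ (1/3:ℝ) *
        ((∫⁻ y, f y ^ (3/2:ℝ)) * (∫⁻ x, g x ^ (3/2:ℝ))) ^ (1/3:ℝ) *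
        ((∫⁻ x, g x ^ (3/2:ℝ)) * (∫⁻ z in ball (0:E3) δ, KK z ^ (3/2:ℝ))) ^ (1/3:ℝ) +
      (∫⁻ y, f y) * (∫⁻ x, g x) * ENNReal.ofReal δ⁻¹ := by
  set F32 := ∫⁻ y, f y ^ (3/2:ℝ) with hF32
  set G32 := ∫⁻ x, g x ^ (3/2:ℝ) with hG32
  set Jδ := ∫⁻ z, K1 δ z ^ (3/2:ℝ) with hJδ
  rw [← J_eq δ]
  have hKsub : Measurable fun z : E3 × E3 => KK (z.1 - z.2) :=
    KK_meas.comp (measurable_fst.sub measurable_snd)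
  have hK1sub : Measurable fun z : E3 × E3 => K1 δ (z.1 - z.2) :=
    (K1_meas δ).comp (measurable_fst.sub measurable_snd)
  have hfs : Measurable fun z : E3 × E3 => f z.2 := hf.comp measurable_snd
  have hgf : Measurable fun z : E3 × E3 => g z.1 := hg.comp measurable_fst
  have hΦm : Measurable fun z : E3 × E3 => f z.2 * g z.1 * KK (z.1 - z.2) :=
    (hfs.mul hgf).mul hKsub
  have hΦ1m : Measurable fun z : E3 × E3 => f z.2 * g z.1 * K1 δ (z.1 - z.2) :=
    (hfs.mul hgf).mul hK1sub
  -- step 1 : write as product integral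
  have step1 : ∫⁻ x, (∫⁻ y, f y * KK (x - y)) * g x =
      ∫⁻ z : E3 × E3, f z.2 * g z.1 * KK (z.1 - z.2) ∂(volume.prod volume) := by
    rw [lintegral_prod _ hΦm.aemeasurable]
    apply lintegral_congr
    intro x
    have hmeas : Measurable fun y : E3 => f y * KK (x - y) :=
      hf.mul (KK_meas.comp (measurable_const.sub measurable_id))
    rw [← lintegral_mul_const _ hmeas]
    apply lintegral_congr
    intro y
    ring
  rw [step1]
  -- step 2 : split kernel
  have step2 : ∫⁻ z : E3 × E3, f z.2 * g z.1 * KK (z.1 - z.2) ∂(volume.prod volume) ≤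
      (∫⁻ z : E3 × E3, f z.2 * g z.1 * K1 δ (z.1 - z.2) ∂(volume.prod volume)) +
      ∫⁻ z : E3 × E3, f z.2 * g z.1 * ENNReal.ofReal δ⁻¹ ∂(volume.prod volume) := by
    rw [← lintegral_add_left hΦ1m]
    apply lintegral_mono
    intro z
    dsimp only
    rw [← mul_add]
    exact mul_le_mul_right (K_le δ hδ _) _
  refine step2.trans (add_le_add ?_ ?_)
  · -- near part
    set a : E3 × E3 → ℝ≥0∞ := fun z => f z.2 ^ (1/2:ℝ) * K1 δ (z.1 - z.2) ^ (1/2:ℝ) with ha_def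
    set b : E3 × E3 → ℝ≥0∞ := fun z => f z.2 ^ (1/2:ℝ) * g z.1 ^ (1/2:ℝ) with hb_def
    set c : E3 × E3 → ℝ≥0∞ := fun z => g z.1 ^ (1/2:ℝ) * K1 δ (z.1 - z.2) ^ (1/2:ℝ) with hc_def
    have ham : Measurable a := (hfs.pow_const _).mul (hK1sub.pow_const _)
    have hbm : Measurable b := (hfs.pow_const _).mul (hgf.pow_const _)
    have hcm : Measurable c := (hgf.pow_const _).mul (hK1sub.pow_const _)
    have habc : ∀ z : E3 × E3, f z.2 * g z.1 * K1 δ (z.1 - z.2) = a z * b z * c z := by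
      intro z
      rw [ha_def, hb_def, hc_def]
      calc f z.2 * g z.1 * K1 δ (z.1 - z.2)
          = (f z.2 ^ (1/2:ℝ) * f z.2 ^ (1/2:ℝ)) * (g z.1 ^ (1/2:ℝ) * g z.1 ^ (1/2:ℝ)) *
              (K1 δ (z.1 - z.2) ^ (1/2:ℝ) * K1 δ (z.1 - z.2) ^ (1/2:ℝ)) := by
            rw [half_mul_half, half_mul_half, half_mul_half]
        _ = _ := by ring
    have hA : ∫⁻ z : E3 × E3, a z ^ (3:ℝ) ∂(volume.prod volume) = F32 * Jδ := by
      have hpt : ∀ z : E3 × E3, a z ^ (3:ℝ) = f z.2 ^ (3/2:ℝ) * K1 δ (z.1 - z.2) ^ (3/2:ℝ) := by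
        intro z
        rw [ha_def]
        rw [ENNReal.mul_rpow_of_nonneg _ _ (by norm_num : (0:ℝ) ≤ 3), cube_half, cube_half]
      rw [lintegral_congr hpt,
        lintegral_prod_symm (fun z : E3 × E3 => f z.2 ^ (3/2:ℝ) * K1 δ (z.1 - z.2) ^ (3/2:ℝ)) (((hfs.pow_const _).mul (hK1sub.pow_const _)).aemeasurable)]
      calc ∫⁻ y, ∫⁻ x, f y ^ (3/2:ℝ) * K1 δ (x - y) ^ (3/2:ℝ)
          = ∫⁻ y, f y ^ (3/2:ℝ) * Jδ := by
            apply lintegral_congr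
            intro y
            have hmeas : Measurable fun x : E3 => K1 δ (x - y) ^ (3/2:ℝ) :=
              ((K1_meas δ).comp (measurable_id.sub measurable_const)).pow_const _
            rw [lintegral_const_mul _ hmeas, lint_K1_sub]
        _ = F32 * Jδ := lintegral_mul_const _ (hf.pow_const _)
    have hB : ∫⁻ z : E3 × E3, b z ^ (3:ℝ) ∂(volume.prod volume) = F32 * G32 := by
      have hpt : ∀ z : E3 × E3, b z ^ (3:ℝ) = f z.2 ^ (3/2:ℝ) * g z.1 ^ (3/2:ℝ) := by
        intro z
        rw [hb_def, ENNReal.mul_rpow_of_nonneg _ _ (by norm_num : (0:ℝ) ≤ 3), cube_half, cube_half]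
      rw [lintegral_congr hpt,
        lintegral_prod (fun z : E3 × E3 => f z.2 ^ (3/2:ℝ) * g z.1 ^ (3/2:ℝ)) (((hfs.pow_const _).mul (hgf.pow_const _)).aemeasurable)]
      calc ∫⁻ x, ∫⁻ y, f y ^ (3/2:ℝ) * g x ^ (3/2:ℝ)
          = ∫⁻ x, F32 * g x ^ (3/2:ℝ) := by
            apply lintegral_congr
            intro x
            rw [lintegral_mul_const _ (hf.pow_const _)]
        _ = F32 * G32 := lintegral_const_mul _ (hg.pow_const _)
    have hC : ∫⁻ z : E3 × E3, c z ^ (3:ℝ) ∂(volume.prod volume) = G32 * Jδ := by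
      have hpt : ∀ z : E3 × E3, c z ^ (3:ℝ) = g z.1 ^ (3/2:ℝ) * K1 δ (z.1 - z.2) ^ (3/2:ℝ) := by
        intro z
        rw [hc_def, ENNReal.mul_rpow_of_nonneg _ _ (by norm_num : (0:ℝ) ≤ 3), cube_half, cube_half]
      rw [lintegral_congr hpt,
        lintegral_prod (fun z : E3 × E3 => g z.1 ^ (3/2:ℝ) * K1 δ (z.1 - z.2) ^ (3/2:ℝ)) (((hgf.pow_const _).mul (hK1sub.pow_const _)).aemeasurable)]
      calc ∫⁻ x, ∫⁻ y, g x ^ (3/2:ℝ) * K1 δ (x - y) ^ (3/2:ℝ)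
          = ∫⁻ x, g x ^ (3/2:ℝ) * Jδ := by
            apply lintegral_congr
            intro x
            have hmeas : Measurable fun y : E3 => K1 δ (x - y) ^ (3/2:ℝ) :=
              ((K1_meas δ).comp (measurable_const.sub measurable_id)).pow_const _
            rw [lintegral_const_mul _ hmeas]
            congr 1
            calc ∫⁻ y, K1 δ (x - y) ^ (3/2:ℝ) = ∫⁻ y, K1 δ (y - x) ^ (3/2:ℝ) := by
                  apply lintegral_congr
                  intro y
                  rw [K1_symm]
              _ = Jδ := lint_K1_sub δ x
        _ = G32 * Jδ := lintegral_mul_const _ (hg.pow_const _)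
    calc ∫⁻ z : E3 × E3, f z.2 * g z.1 * K1 δ (z.1 - z.2) ∂(volume.prod volume)
        = ∫⁻ z : E3 × E3, a z * b z * c z ∂(volume.prod volume) := lintegral_congr habc
      _ ≤ (∫⁻ z, a z ^ (3:ℝ) ∂(volume.prod volume)) ^ (1/3:ℝ) *
            (∫⁻ z, b z ^ (3:ℝ) ∂(volume.prod volume)) ^ (1/3:ℝ) *
            (∫⁻ z, c z ^ (3:ℝ) ∂(volume.prod volume)) ^ (1/3:ℝ) :=
          holder3 _ ham.aemeasurable hbm.aemeasurable hcm.aemeasurable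
      _ = (F32 * Jδ) ^ (1/3:ℝ) * (F32 * G32) ^ (1/3:ℝ) * (G32 * Jδ) ^ (1/3:ℝ) := by
          rw [hA, hB, hC]
  · -- far part
    have hstep : ∫⁻ z : E3 × E3, f z.2 * g z.1 * ENNReal.ofReal δ⁻¹ ∂(volume.prod volume) =
        (∫⁻ y, f y) * (∫⁻ x, g x) * ENNReal.ofReal δ⁻¹ := by
      rw [lintegral_prod (fun z : E3 × E3 => f z.2 * g z.1 * ENNReal.ofReal δ⁻¹) ((hfs.mul hgf).mul measurable_const).aemeasurable]
      calc ∫⁻ x, ∫⁻ y, f y * g x * ENNReal.ofReal δ⁻¹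
          = ∫⁻ x, (∫⁻ y, f y) * (g x * ENNReal.ofReal δ⁻¹) := by
            apply lintegral_congr
            intro x
            have hmeas : Measurable fun y : E3 => f y := hf
            rw [← lintegral_mul_const _ hmeas]
            apply lintegral_congr
            intro y
            ring
        _ = (∫⁻ y, f y) * ∫⁻ x, g x * ENNReal.ofReal δ⁻¹ :=
            lintegral_const_mul _ (hg.mul measurable_const)
        _ = _ := by rw [lintegral_mul_const _ hg, mul_assoc]
    exact hstep.le

lemma rpow_tendsto_zero {h : ℕ → ℝ≥0∞} (hh : Tendsto h atTop (nhds 0)) {y : ℝ} (hy : 0 < y) :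
    Tendsto (fun n => h n ^ y) atTop (nhds 0) := by
  have := ((ENNReal.continuous_rpow_const (y := y)).tendsto 0).comp hh
  rwa [ENNReal.zero_rpow_of_pos hy] at this

theorem key (q : E3 → ℝ≥0∞) (hq : Measurable q)
    (hq2 : ∫⁻ x, q x ^ (2:ℝ) ≠ ∞) (hq6 : ∫⁻ x, q x ^ (6:ℝ) ≠ ∞)
    (vv ww : ℕ → E3 → ℝ≥0∞) (hvm : ∀ n, Measurable (vv n)) (hwm : ∀ n, Measurable (ww n))
    (Mv Mw : ℝ≥0∞) (hMv : Mv ≠ ∞) (hMw : Mw ≠ ∞)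
    (hbv : ∀ n, ∫⁻ x, vv n x ^ (2:ℝ) ≤ Mv) (hbw : ∀ n, ∫⁻ x, ww n x ^ (2:ℝ) ≤ Mw)
    (hloc : ∀ r : ℕ, Tendsto (fun n => ∫⁻ x in closedBall (0:E3) (r:ℝ), vv n x ^ (2:ℝ))
      atTop (nhds 0)) :
    Tendsto (fun n => ∫⁻ x, (∫⁻ y, (q y * vv n y) * KK (x - y)) * (q x * ww n x))
      atTop (nhds 0) := by
  set J : ℝ → ℝ≥0∞ := fun δ => ∫⁻ z in ball (0:E3) δ, KK z ^ (3/2:ℝ) with hJ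
  set L : ℕ → ℕ → ℝ≥0∞ := fun n r => ∫⁻ x in closedBall (0:E3) (r:ℝ), vv n x ^ (2:ℝ) with hL
  set T : ℕ → ℝ≥0∞ := fun r => ∫⁻ x in (closedBall (0:E3) (r:ℝ))ᶜ, q x ^ (2:ℝ) with hT
  set Cq6 := (∫⁻ x, q x ^ (6:ℝ)) ^ (1/4:ℝ) with hCq6
  set Cq2 := (∫⁻ x, q x ^ (2:ℝ)) ^ (1/2:ℝ) with hCq2
  set Cf := Cq6 * Mv ^ (3/4:ℝ) with hCf
  set Cg := Cq6 * Mw ^ (3/4:ℝ) with hCg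
  set Cg1 := Cq2 * Mw ^ (1/2:ℝ) with hCg1
  set CC := Cf ^ (2/3:ℝ) * Cg ^ (2/3:ℝ) with hCC
  have hCq6t : Cq6 ≠ ∞ := (ENNReal.rpow_lt_top_of_nonneg (by norm_num) hq6).ne
  have hCq2t : Cq2 ≠ ∞ := (ENNReal.rpow_lt_top_of_nonneg (by norm_num) hq2).ne
  have hCft : Cf ≠ ∞ :=
    (ENNReal.mul_lt_top hCq6t.lt_top (ENNReal.rpow_lt_top_of_nonneg (by norm_num) hMv)).ne
  have hCgt : Cg ≠ ∞ :=
    (ENNReal.mul_lt_top hCq6t.lt_top (ENNReal.rpow_lt_top_of_nonneg (by norm_num) hMw)).ne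
  have hCg1t : Cg1 ≠ ∞ :=
    (ENNReal.mul_lt_top hCq2t.lt_top (ENNReal.rpow_lt_top_of_nonneg (by norm_num) hMw)).ne
  have hCCt : CC ≠ ∞ :=
    (ENNReal.mul_lt_top (ENNReal.rpow_lt_top_of_nonneg (by norm_num) hCft)
      (ENNReal.rpow_lt_top_of_nonneg (by norm_num) hCgt)).ne
  -- uniform bounds
  have hFb : ∀ n, ∫⁻ y, (q y * vv n y) ^ (3/2:ℝ) ≤ Cf := by
    intro n
    refine (f32_bound hq (hvm n)).trans ?_
    exact mul_le_mul_right (ENNReal.rpow_le_rpow (hbv n) (by norm_num)) _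
  have hGb : ∀ n, ∫⁻ x, (q x * ww n x) ^ (3/2:ℝ) ≤ Cg := by
    intro n
    refine (f32_bound hq (hwm n)).trans ?_
    exact mul_le_mul_right (ENNReal.rpow_le_rpow (hbw n) (by norm_num)) _
  have hG1 : ∀ n, ∫⁻ x, q x * ww n x ≤ Cg1 := by
    intro n
    refine (holder2 volume hq.aemeasurable (hwm n).aemeasurable).trans ?_
    exact mul_le_mul_right (ENNReal.rpow_le_rpow (hbw n) (by norm_num)) _
  have hFL : ∀ n r, ∫⁻ y, q y * vv n y ≤
      Cq2 * (L n r) ^ (1/2:ℝ) + (T r) ^ (1/2:ℝ) * Mv ^ (1/2:ℝ) := by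
    intro n r
    rw [← lintegral_add_compl (fun y => q y * vv n y) measurableSet_closedBall
      (μ := (volume : Measure E3))]
    apply add_le_add
    · refine (holder2 _ hq.aemeasurable (hvm n).aemeasurable).trans ?_
      exact mul_le_mul'
        (ENNReal.rpow_le_rpow (setLIntegral_le_lintegral _ _) (by norm_num)) le_rfl
    · refine (holder2 _ hq.aemeasurable (hvm n).aemeasurable).trans ?_
      exact mul_le_mul' le_rfl
        (ENNReal.rpow_le_rpow ((setLIntegral_le_lintegral _ _).trans (hbv n)) (by norm_num))
  clear_value Cq6 Cq2 Cf Cg Cg1 CC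
  -- main estimate
  have main : ∀ (n r : ℕ) (δ : ℝ), 0 < δ →
      ∫⁻ x, (∫⁻ y, (q y * vv n y) * KK (x - y)) * (q x * ww n x) ≤
        CC * (J δ) ^ (2/3:ℝ) +
          (Cq2 * (L n r) ^ (1/2:ℝ) + (T r) ^ (1/2:ℝ) * Mv ^ (1/2:ℝ)) * Cg1 *
            ENNReal.ofReal δ⁻¹ := by
    intro n r δ hδ
    refine (single_est (hq.mul (hvm n)) (hq.mul (hwm n)) hδ).trans (add_le_add ?_ ?_)
    · calc ((∫⁻ y, (q y * vv n y) ^ (3/2:ℝ)) * J δ) ^ (1/3:ℝ) *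
            ((∫⁻ y, (q y * vv n y) ^ (3/2:ℝ)) * (∫⁻ x, (q x * ww n x) ^ (3/2:ℝ))) ^ (1/3:ℝ) *
            ((∫⁻ x, (q x * ww n x) ^ (3/2:ℝ)) * J δ) ^ (1/3:ℝ)
          ≤ (Cf * J δ) ^ (1/3:ℝ) * (Cf * Cg) ^ (1/3:ℝ) * (Cg * J δ) ^ (1/3:ℝ) := by
            refine mul_le_mul' (mul_le_mul' ?_ ?_) ?_
            · exact ENNReal.rpow_le_rpow (mul_le_mul_left (hFb n) _) (by norm_num)
            · exact ENNReal.rpow_le_rpow (mul_le_mul' (hFb n) (hGb n)) (by norm_num)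
            · exact ENNReal.rpow_le_rpow (mul_le_mul_left (hGb n) _) (by norm_num)
        _ = CC * (J δ) ^ (2/3:ℝ) := by
            rw [ENNReal.mul_rpow_of_nonneg _ _ (by norm_num : (0:ℝ) ≤ 1/3),
              ENNReal.mul_rpow_of_nonneg _ _ (by norm_num : (0:ℝ) ≤ 1/3),
              ENNReal.mul_rpow_of_nonneg _ _ (by norm_num : (0:ℝ) ≤ 1/3), hCC]
            calc Cf ^ (1/3:ℝ) * (J δ) ^ (1/3:ℝ) * (Cf ^ (1/3:ℝ) * Cg ^ (1/3:ℝ)) *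
                  (Cg ^ (1/3:ℝ) * (J δ) ^ (1/3:ℝ))
                = (Cf ^ (1/3:ℝ) * Cf ^ (1/3:ℝ)) * ((Cg ^ (1/3:ℝ) * Cg ^ (1/3:ℝ)) *
                    ((J δ) ^ (1/3:ℝ) * (J δ) ^ (1/3:ℝ))) := by ring
              _ = Cf ^ (2/3:ℝ) * (Cg ^ (2/3:ℝ) * (J δ) ^ (2/3:ℝ)) := by
                  rw [third_mul_third, third_mul_third, third_mul_third]
              _ = Cf ^ (2/3:ℝ) * Cg ^ (2/3:ℝ) * (J δ) ^ (2/3:ℝ) := by ring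
    · exact mul_le_mul_left (mul_le_mul' (hFL n r) (hG1 n)) _
  -- assembly
  rw [ENNReal.tendsto_atTop_zero]
  intro ε hε
  rcases eq_or_ne ε ⊤ with rfl | hεtop
  · exact ⟨0, fun n _ => le_top⟩
  have hε2 : (0:ℝ≥0∞) < ε / 2 := ENNReal.half_pos hε.ne'
  have hε4 : (0:ℝ≥0∞) < ε / 2 / 2 := ENNReal.half_pos hε2.ne'
  -- choose δ
  have hJt : Tendsto (fun m : ℕ => CC * (J (1/(m+1:ℝ))) ^ (2/3:ℝ)) atTop (nhds 0) := by
    have h1 := rpow_tendsto_zero (h := fun m : ℕ => J (1/(m+1:ℝ))) J_tendsto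
      (by norm_num : (0:ℝ) < 2/3)
    have := ENNReal.Tendsto.const_mul h1 (Or.inr hCCt)
    simpa using this
  rw [ENNReal.tendsto_atTop_zero] at hJt
  obtain ⟨m, hm⟩ := hJt (ε/2) hε2
  have hδpos : (0:ℝ) < 1/(m+1:ℝ) := by positivity
  set δ := 1/(m+1:ℝ) with hδdef
  have hnear : CC * (J δ) ^ (2/3:ℝ) ≤ ε/2 := hm m le_rfl
  set CD := Cg1 * ENNReal.ofReal δ⁻¹ with hCD
  have hCDt : CD ≠ ∞ := (ENNReal.mul_lt_top hCg1t.lt_top ENNReal.ofReal_lt_top).ne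
  -- choose r
  have hTt : Tendsto (fun r : ℕ => (T r) ^ (1/2:ℝ) * Mv ^ (1/2:ℝ) * CD) atTop (nhds 0) := by
    have h1 := rpow_tendsto_zero (h := T) (tail_tendsto hq hq2) (by norm_num : (0:ℝ) < 1/2)
    have hMvh : (Mv ^ (1/2:ℝ)) ≠ ⊤ :=
      (ENNReal.rpow_lt_top_of_nonneg (by norm_num) hMv).ne
    have h2 := ENNReal.Tendsto.mul_const h1 (Or.inr hMvh)
    have h3 := ENNReal.Tendsto.mul_const h2 (Or.inr hCDt)
    simpa using h3
  rw [ENNReal.tendsto_atTop_zero] at hTt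
  obtain ⟨r, hr⟩ := hTt (ε/2/2) hε4
  have htail : (T r) ^ (1/2:ℝ) * Mv ^ (1/2:ℝ) * CD ≤ ε/2/2 := hr r le_rfl
  -- choose N
  have hLt : Tendsto (fun n : ℕ => Cq2 * (L n r) ^ (1/2:ℝ) * CD) atTop (nhds 0) := by
    have h1 := rpow_tendsto_zero (h := fun n => L n r) (hloc r) (by norm_num : (0:ℝ) < 1/2)
    have h2 := ENNReal.Tendsto.const_mul h1 (Or.inr hCq2t)
    have h3 := ENNReal.Tendsto.mul_const h2 (Or.inr hCDt)
    simpa [mul_assoc] using h3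
  rw [ENNReal.tendsto_atTop_zero] at hLt
  obtain ⟨N, hN⟩ := hLt (ε/2/2) hε4
  refine ⟨N, fun n hn => ?_⟩
  calc ∫⁻ x, (∫⁻ y, (q y * vv n y) * KK (x - y)) * (q x * ww n x)
      ≤ CC * (J δ) ^ (2/3:ℝ) +
          (Cq2 * (L n r) ^ (1/2:ℝ) + (T r) ^ (1/2:ℝ) * Mv ^ (1/2:ℝ)) * Cg1 *
            ENNReal.ofReal δ⁻¹ := main n r δ hδpos
    _ = CC * (J δ) ^ (2/3:ℝ) +
          (Cq2 * (L n r) ^ (1/2:ℝ) * CD + (T r) ^ (1/2:ℝ) * Mv ^ (1/2:ℝ) * CD) := by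
        rw [hCD]; ring
    _ ≤ ε/2 + (ε/2/2 + ε/2/2) := add_le_add hnear (add_le_add (hN n hn) htail)
    _ = ε := by rw [ENNReal.add_halves, ENNReal.add_halves]

lemma lint_sq {α : Type*} [MeasurableSpace α] (μ : Measure α) (u : α → ℝ) :
    ∫⁻ x, (ENNReal.ofReal |u x|) ^ (2:ℝ) ∂μ = eLpNorm u 2 μ ^ (2:ℝ) := by
  have h : ∀ x, (ENNReal.ofReal |u x|) = ‖u x‖ₑ := fun x =>
    (Real.enorm_eq_ofReal_abs _).symm
  simp_rw [h]
  rw [eLpNorm_eq_lintegral_rpow_enorm_toReal two_ne_zero ENNReal.ofNat_ne_top, ← ENNReal.rpow_mul]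
  norm_num

lemma lint_six {α : Type*} [MeasurableSpace α] (μ : Measure α) (u : α → ℝ) :
    ∫⁻ x, (ENNReal.ofReal |u x|) ^ (6:ℝ) ∂μ = eLpNorm u 6 μ ^ (6:ℝ) := by
  have h : ∀ x, (ENNReal.ofReal |u x|) = ‖u x‖ₑ := fun x =>
    (Real.enorm_eq_ofReal_abs _).symm
  simp_rw [h]
  rw [eLpNorm_eq_lintegral_rpow_enorm_toReal (by norm_num) (by norm_num), ← ENNReal.rpow_mul]
  norm_num

end Stmt9

open Stmt9

/-- Let `Q ∈ L²(ℝ³) ∩ L⁶(ℝ³)` and let `(v_n)`, `(w_n)` be bounded sequences in `L²(ℝ³)` with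
`v_n → 0` in `L²(K)` for every compact `K`. Then
`∫ (|·|⁻¹ * |Q v_n|)(x) |Q(x) w_n(x)| dx → 0`. -/
theorem stmt_9 (Q : EuclideanSpace ℝ (Fin 3) → ℝ)
    (hQ2 : MemLp Q 2 volume) (hQ6 : MemLp Q 6 volume)
    (v w : ℕ → EuclideanSpace ℝ (Fin 3) → ℝ)
    (hv_meas : ∀ n, AEStronglyMeasurable (v n) volume)
    (hw_meas : ∀ n, AEStronglyMeasurable (w n) volume)
    (hv_bdd : ∃ M : ℝ, ∀ n, eLpNorm (v n) 2 volume ≤ ENNReal.ofReal M)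
    (hw_bdd : ∃ M : ℝ, ∀ n, eLpNorm (w n) 2 volume ≤ ENNReal.ofReal M)
    (hv_loc : ∀ K : Set (EuclideanSpace ℝ (Fin 3)), IsCompact K →
      Tendsto (fun n => eLpNorm (v n) 2 (volume.restrict K)) atTop (nhds 0)) :
    Tendsto (fun n =>
        ∫⁻ x, (∫⁻ y, ENNReal.ofReal (|Q y * v n y| / ‖x - y‖)) *
          ENNReal.ofReal (|Q x * w n x|))
      atTop (nhds 0) := by
  classical
  obtain ⟨Mv0, hMv0⟩ := hv_bdd
  obtain ⟨Mw0, hMw0⟩ := hw_bdd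
  have hQm : AEStronglyMeasurable Q volume := hQ2.1
  set Q' : E3 → ℝ := hQm.mk Q with hQ'def
  have hQ'meas : Measurable Q' := hQm.stronglyMeasurable_mk.measurable
  have hQae : Q =ᵐ[volume] Q' := hQm.ae_eq_mk
  set v' : ℕ → E3 → ℝ := fun n => (hv_meas n).mk (v n) with hv'def
  set w' : ℕ → E3 → ℝ := fun n => (hw_meas n).mk (w n) with hw'def
  have hv'meas : ∀ n, Measurable (v' n) := fun n => (hv_meas n).stronglyMeasurable_mk.measurable
  have hw'meas : ∀ n, Measurable (w' n) := fun n => (hw_meas n).stronglyMeasurable_mk.measurable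
  have hvae : ∀ n, v n =ᵐ[volume] v' n := fun n => (hv_meas n).ae_eq_mk
  have hwae : ∀ n, w n =ᵐ[volume] w' n := fun n => (hw_meas n).ae_eq_mk
  set q : E3 → ℝ≥0∞ := fun y => ENNReal.ofReal |Q' y| with hq_def
  set vv : ℕ → E3 → ℝ≥0∞ := fun n y => ENNReal.ofReal |v' n y| with hvv_def
  set ww : ℕ → E3 → ℝ≥0∞ := fun n x => ENNReal.ofReal |w' n x| with hww_def
  have hqmeas : Measurable q := hQ'meas.abs.ennreal_ofReal
  have hvvmeas : ∀ n, Measurable (vv n) := fun n => (hv'meas n).abs.ennreal_ofReal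
  have hwwmeas : ∀ n, Measurable (ww n) := fun n => (hw'meas n).abs.ennreal_ofReal
  -- integral identities
  have hq2 : ∫⁻ x, q x ^ (2:ℝ) ≠ ∞ := by
    have he : ∫⁻ x, q x ^ (2:ℝ) = ∫⁻ x, (ENNReal.ofReal |Q x|) ^ (2:ℝ) := by
      apply lintegral_congr_ae
      filter_upwards [hQae] with x hx
      rw [hq_def, hx]
    rw [he, lint_sq]
    exact (ENNReal.rpow_lt_top_of_nonneg (by norm_num) hQ2.2.ne).ne
  have hq6 : ∫⁻ x, q x ^ (6:ℝ) ≠ ∞ := by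
    have he : ∫⁻ x, q x ^ (6:ℝ) = ∫⁻ x, (ENNReal.ofReal |Q x|) ^ (6:ℝ) := by
      apply lintegral_congr_ae
      filter_upwards [hQae] with x hx
      rw [hq_def, hx]
    rw [he, lint_six]
    exact (ENNReal.rpow_lt_top_of_nonneg (by norm_num) hQ6.2.ne).ne
  set Mv : ℝ≥0∞ := (ENNReal.ofReal Mv0) ^ (2:ℝ) with hMv_def
  set Mw : ℝ≥0∞ := (ENNReal.ofReal Mw0) ^ (2:ℝ) with hMw_def
  have hMvt : Mv ≠ ∞ := (ENNReal.rpow_lt_top_of_nonneg (by norm_num) ENNReal.ofReal_ne_top).ne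
  have hMwt : Mw ≠ ∞ := (ENNReal.rpow_lt_top_of_nonneg (by norm_num) ENNReal.ofReal_ne_top).ne
  have hbv : ∀ n, ∫⁻ x, vv n x ^ (2:ℝ) ≤ Mv := by
    intro n
    have he : ∫⁻ x, vv n x ^ (2:ℝ) = ∫⁻ x, (ENNReal.ofReal |v n x|) ^ (2:ℝ) := by
      apply lintegral_congr_ae
      filter_upwards [hvae n] with x hx
      rw [hvv_def, hx]
    rw [he, lint_sq]
    exact ENNReal.rpow_le_rpow (hMv0 n) (by norm_num)
  have hbw : ∀ n, ∫⁻ x, ww n x ^ (2:ℝ) ≤ Mw := by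
    intro n
    have he : ∫⁻ x, ww n x ^ (2:ℝ) = ∫⁻ x, (ENNReal.ofReal |w n x|) ^ (2:ℝ) := by
      apply lintegral_congr_ae
      filter_upwards [hwae n] with x hx
      rw [hww_def, hx]
    rw [he, lint_sq]
    exact ENNReal.rpow_le_rpow (hMw0 n) (by norm_num)
  have hloc : ∀ r : ℕ, Tendsto (fun n => ∫⁻ x in closedBall (0:E3) (r:ℝ), vv n x ^ (2:ℝ))
      atTop (nhds 0) := by
    intro r
    have hcomp : IsCompact (closedBall (0:E3) (r:ℝ)) := isCompact_closedBall _ _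
    have h0 := hv_loc _ hcomp
    have h1 := rpow_tendsto_zero h0 (by norm_num : (0:ℝ) < 2)
    apply h1.congr
    intro n
    have he : ∫⁻ x in closedBall (0:E3) (r:ℝ), vv n x ^ (2:ℝ) =
        ∫⁻ x in closedBall (0:E3) (r:ℝ), (ENNReal.ofReal |v n x|) ^ (2:ℝ) := by
      apply lintegral_congr_ae
      filter_upwards [ae_restrict_of_ae (hvae n)] with x hx
      rw [hvv_def, hx]
    rw [← lint_sq (volume.restrict (closedBall (0:E3) (r:ℝ))) (v n), ← he]
  have hkey := key q hqmeas hq2 hq6 vv ww hvvmeas hwwmeas Mv Mw hMvt hMwt hbv hbw hloc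
  apply hkey.congr
  intro n
  -- identify the integrands
  have hinner : ∀ x : E3, (∫⁻ y, (q y * vv n y) * KK (x - y)) =
      ∫⁻ y, ENNReal.ofReal (|Q y * v n y| / ‖x - y‖) := by
    intro x
    apply lintegral_congr_ae
    filter_upwards [hQae, hvae n] with y hy1 hy2
    rw [hy1, hy2, div_eq_mul_inv, abs_mul, ENNReal.ofReal_mul (by positivity),
      ENNReal.ofReal_mul (abs_nonneg _)]
    rfl
  apply lintegral_congr_ae
  filter_upwards [hQae, hwae n] with x hx1 hx2
  rw [hinner x]
  congr 1
  rw [hx1, hx2, abs_mul, ENNReal.ofReal_mul (abs_nonneg _)]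
end
end
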